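/- For all d ≥ 1, k ≥ 2, n ≥ 1 and every homology degree q > 0, the map H_q(M_d^{(k)}(n)) → H_q(M_d^{(k+1)}(n)) induced by the inclusion is the zero map. -/

import Mathlib

open CategoryTheory

/-- The non-`k`-equal configuration space of `n` labeled points in `ℝ^d`. -/
def nonKEqual (d k n : ℕ) : Set (Fin n → EuclideanSpace ℝ (Fin d)) :=
  {x | ∀ S : Finset (Fin n), S.card = k → ∃ i ∈ S, ∃ j ∈ S, x i ≠ x j}

noncomputable section Stmt4Aux

/-- distinguished unit vector -/
def evec (d : ℕ) (hd : 1 ≤ d) : EuclideanSpace ℝ (Fin d) :=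
  EuclideanSpace.single ⟨0, hd⟩ 1

lemma norm_evec (d : ℕ) (hd : 1 ≤ d) : ‖evec d hd‖ = 1 := by
  rw [evec, EuclideanSpace.norm_single]; norm_num

lemma evec_ne (d : ℕ) (hd : 1 ≤ d) : evec d hd ≠ 0 := by
  intro h
  have := norm_evec d hd
  rw [h, norm_zero] at this
  norm_num at this

/-- big radius -/
def Rf {d n : ℕ} (x : Fin n → EuclideanSpace ℝ (Fin d)) : ℝ := 1 + ∑ i, ‖x i‖

lemma Rf_ge {d n : ℕ} (x : Fin n → EuclideanSpace ℝ (Fin d)) (j : Fin n) :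
    1 + ‖x j‖ ≤ Rf x := by
  unfold Rf
  have : ‖x j‖ ≤ ∑ i, ‖x i‖ :=
    Finset.single_le_sum (fun i _ => norm_nonneg (x i)) (Finset.mem_univ j)
  linarith

lemma Rf_ge_one {d n : ℕ} (x : Fin n → EuclideanSpace ℝ (Fin d)) : 1 ≤ Rf x := by
  unfold Rf
  have : (0:ℝ) ≤ ∑ i, ‖x i‖ := Finset.sum_nonneg fun i _ => norm_nonneg (x i)
  linarith

/-- the "clock" for point `i` -/
def sfun (n : ℕ) (t : ℝ) (i : Fin n) : ℝ := min 1 (max 0 (((n:ℝ)+1)*t - (i:ℕ)))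

/-- the shrinking scale of parked points -/
def rho {d n : ℕ} (x : Fin n → EuclideanSpace ℝ (Fin d)) (t : ℝ) : ℝ :=
  1 + (Rf x - 1) * min 1 (max 0 ((n:ℝ)+1 - ((n:ℝ)+1)*t))

lemma rho_ge_one {d n : ℕ} (x : Fin n → EuclideanSpace ℝ (Fin d)) (t : ℝ) :
    1 ≤ rho x t := by
  unfold rho
  have h1 : (0:ℝ) ≤ min 1 (max 0 ((n:ℝ)+1 - ((n:ℝ)+1)*t)) :=
    le_min (by norm_num) (le_max_left _ _)
  have h2 : (0:ℝ) ≤ Rf x - 1 := by have := Rf_ge_one x; linarith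
  nlinarith

lemma sfun_nonneg (n : ℕ) (t : ℝ) (i : Fin n) : 0 ≤ sfun n t i :=
  le_min (by norm_num) (le_max_left _ _)

lemma sfun_le_one (n : ℕ) (t : ℝ) (i : Fin n) : sfun n t i ≤ 1 := min_le_left _ _

lemma sfun_window {n : ℕ} (t : ℝ) (m : Fin n)
    (h0 : sfun n t m ≠ 0) (h1 : sfun n t m ≠ 1) :
    ((m:ℕ):ℝ) < ((n:ℝ)+1)*t ∧ ((n:ℝ)+1)*t < ((m:ℕ):ℝ) + 1 := by
  set τ := ((n:ℝ)+1)*t with hτ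
  constructor
  · by_contra hc
    push_neg at hc
    apply h0
    unfold sfun
    rw [max_eq_left (by linarith : τ - ((m:ℕ):ℝ) ≤ 0)]
    simp
  · by_contra hc
    push_neg at hc
    apply h1
    unfold sfun
    rw [max_eq_right (by linarith : (0:ℝ) ≤ τ - ((m:ℕ):ℝ)),
      min_eq_left (by linarith : (1:ℝ) ≤ τ - ((m:ℕ):ℝ))]

/-- at most one point is in transit -/
lemma moving_unique {n : ℕ} (t : ℝ) (i j : Fin n)
    (hi0 : sfun n t i ≠ 0) (hi1 : sfun n t i ≠ 1)
    (hj0 : sfun n t j ≠ 0) (hj1 : sfun n t j ≠ 1) : i = j := by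
  obtain ⟨hi, hi'⟩ := sfun_window t i hi0 hi1
  obtain ⟨hj, hj'⟩ := sfun_window t j hj0 hj1
  have h1 : ((i:ℕ):ℝ) < ((j:ℕ):ℝ) + 1 := lt_trans hi hj'
  have h2 : ((j:ℕ):ℝ) < ((i:ℕ):ℝ) + 1 := lt_trans hj hi'
  have h1' : (i:ℕ) < (j:ℕ) + 1 := by exact_mod_cast h1
  have h2' : (j:ℕ) < (i:ℕ) + 1 := by exact_mod_cast h2
  exact Fin.ext (le_antisymm (Nat.lt_succ_iff.1 h1') (Nat.lt_succ_iff.1 h2'))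

/-- If some point's clock hasn't finished, `rho = Rf x`. -/
lemma rho_eq_of_lt {d n : ℕ} (x : Fin n → EuclideanSpace ℝ (Fin d)) (t : ℝ)
    (j : Fin n) (hj : sfun n t j ≠ 1) : rho x t = Rf x := by
  have hjlt : sfun n t j < 1 := lt_of_le_of_ne (sfun_le_one n t j) hj
  have hmax : max 0 (((n:ℝ)+1)*t - ((j:ℕ):ℝ)) < 1 := by
    by_contra hc
    push_neg at hc
    have : (1:ℝ) ≤ sfun n t j := le_min le_rfl hc
    linarith
  have ht : ((n:ℝ)+1)*t - ((j:ℕ):ℝ) < 1 := lt_of_le_of_lt (le_max_right _ _) hmax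
  have hjn : ((j:ℕ):ℝ) ≤ (n:ℝ) - 1 := by
    have h' : (j:ℕ) + 1 ≤ n := j.2
    have := (Nat.cast_le (α := ℝ)).2 h'
    push_cast at this
    linarith
  have h1 : (1:ℝ) ≤ (n:ℝ)+1 - ((n:ℝ)+1)*t := by linarith
  unfold rho
  rw [max_eq_right (by linarith : (0:ℝ) ≤ (n:ℝ)+1 - ((n:ℝ)+1)*t), min_eq_left h1]
  ring

/-- the moving-swarm position map -/
def pos {d n : ℕ} (hd : 1 ≤ d) (x : Fin n → EuclideanSpace ℝ (Fin d)) (t : ℝ)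
    (i : Fin n) : EuclideanSpace ℝ (Fin d) :=
  (1 - sfun n t i) • x i + (sfun n t i * (rho x t * (((i:ℕ):ℝ)+1))) • evec d hd

lemma pos_of_zero {d n : ℕ} (hd : 1 ≤ d) (x : Fin n → EuclideanSpace ℝ (Fin d))
    (t : ℝ) (i : Fin n) (h : sfun n t i = 0) : pos hd x t i = x i := by
  simp [pos, h]

lemma pos_of_one {d n : ℕ} (hd : 1 ≤ d) (x : Fin n → EuclideanSpace ℝ (Fin d))
    (t : ℝ) (i : Fin n) (h : sfun n t i = 1) :
    pos hd x t i = (rho x t * (((i:ℕ):ℝ)+1)) • evec d hd := by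
  simp [pos, h]

/-- parked points are pairwise distinct -/
lemma parked_inj {d n : ℕ} (hd : 1 ≤ d) (x : Fin n → EuclideanSpace ℝ (Fin d))
    (t : ℝ) (i j : Fin n) (hi : sfun n t i = 1) (hj : sfun n t j = 1)
    (hij : pos hd x t i = pos hd x t j) : i = j := by
  rw [pos_of_one hd x t i hi, pos_of_one hd x t j hj] at hij
  have h2 : (rho x t * (((i:ℕ):ℝ)+1) - rho x t * (((j:ℕ):ℝ)+1)) • evec d hd = 0 := by
    rw [sub_smul, hij, sub_self]
  rcases smul_eq_zero.1 h2 with hs | he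
  · have hρ : (0:ℝ) < rho x t := lt_of_lt_of_le one_pos (rho_ge_one x t)
    have hs' : rho x t * (((i:ℕ):ℝ)+1) = rho x t * (((j:ℕ):ℝ)+1) := by linarith [sub_eq_zero.1 hs]
    have : (((i:ℕ):ℝ)+1) = (((j:ℕ):ℝ)+1) := mul_left_cancel₀ (ne_of_gt hρ) hs'
    have : ((i:ℕ):ℝ) = ((j:ℕ):ℝ) := by linarith
    exact Fin.ext (by exact_mod_cast this)
  · exact absurd he (evec_ne d hd)

/-- a parked point never coincides with a still-waiting point -/
lemma parked_ne_orig {d n : ℕ} (hd : 1 ≤ d) (x : Fin n → EuclideanSpace ℝ (Fin d))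
    (t : ℝ) (i j : Fin n) (hi : sfun n t i = 1) (hj : sfun n t j = 0) :
    pos hd x t i ≠ pos hd x t j := by
  intro hij
  rw [pos_of_one hd x t i hi, pos_of_zero hd x t j hj] at hij
  have hρ : rho x t = Rf x := rho_eq_of_lt x t j (by rw [hj]; norm_num)
  have hnorm : ‖(rho x t * (((i:ℕ):ℝ)+1)) • evec d hd‖ = rho x t * (((i:ℕ):ℝ)+1) := by
    rw [norm_smul, norm_evec, mul_one, Real.norm_eq_abs, abs_of_pos]
    have h1 : (1:ℝ) ≤ rho x t := rho_ge_one x t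
    have h2 : (0:ℝ) < ((i:ℕ):ℝ)+1 := by positivity
    nlinarith
  have hbig : ‖x j‖ < rho x t * (((i:ℕ):ℝ)+1) := by
    have h1 : 1 + ‖x j‖ ≤ Rf x := Rf_ge x j
    have h2 : (1:ℝ) ≤ ((i:ℕ):ℝ)+1 := by
      have : (0:ℝ) ≤ ((i:ℕ):ℝ) := Nat.cast_nonneg _
      linarith
    have h3 : (1:ℝ) ≤ Rf x := Rf_ge_one x
    rw [hρ]
    nlinarith
  rw [hij] at hnorm
  linarith [hnorm ▸ hbig]

/-- key membership lemma: the homotopy stays in the non-(k+1)-equal space. -/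
lemma pos_mem {d k n : ℕ} (hd : 1 ≤ d) (hk : 2 ≤ k)
    (x : Fin n → EuclideanSpace ℝ (Fin d)) (hx : x ∈ nonKEqual d k n) (t : ℝ) :
    (fun i => pos hd x t i) ∈ nonKEqual d (k+1) n := by
  intro S hS
  by_contra hcon
  push_neg at hcon
  -- hcon : ∀ i ∈ S, ∀ j ∈ S, pos hd x t i = pos hd x t j
  by_cases hO : ∃ j ∈ S, sfun n t j = 0
  · obtain ⟨j0, hj0S, hj0⟩ := hO
    -- no parked point in S
    have hnopark : ∀ i ∈ S, sfun n t i ≠ 1 := by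
      intro i hiS hi1
      exact parked_ne_orig hd x t i j0 hi1 hj0 (hcon i hiS j0 hj0S)
    -- the non-zero clocks in S form a set of card ≤ 1
    set O := S.filter (fun i => sfun n t i = 0) with hOdef
    have hcard1 : (S \ O).card ≤ 1 := by
      apply Finset.card_le_one.2
      intro a ha b hb
      have haS := (Finset.mem_sdiff.1 ha).1
      have ha0 : sfun n t a ≠ 0 := by
        have := (Finset.mem_sdiff.1 ha).2
        simpa [hOdef, haS] using this
      have hbS := (Finset.mem_sdiff.1 hb).1
      have hb0 : sfun n t b ≠ 0 := by
        have := (Finset.mem_sdiff.1 hb).2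
        simpa [hOdef, hbS] using this
      exact moving_unique t a b ha0 (hnopark a haS) hb0 (hnopark b hbS)
    have hOsub : O ⊆ S := Finset.filter_subset _ _
    have hOcard : k ≤ O.card := by
      have h1 : S.card - O.card ≤ 1 := by
        rw [← Finset.card_sdiff_of_subset hOsub] at *
        exact hcard1
      have h2 : O.card ≤ S.card := Finset.card_le_card hOsub
      omega
    obtain ⟨T, hTO, hT⟩ := Finset.exists_subset_card_eq hOcard
    obtain ⟨i, hiT, j, hjT, hij⟩ := hx T hT
    apply hij
    have hiO := hTO hiT
    have hjO := hTO hjT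
    have hi0 : sfun n t i = 0 := (Finset.mem_filter.1 hiO).2
    have hj0' : sfun n t j = 0 := (Finset.mem_filter.1 hjO).2
    have := hcon i (hOsub hiO) j (hOsub hjO)
    rwa [pos_of_zero hd x t i hi0, pos_of_zero hd x t j hj0'] at this
  · -- every clock in S is nonzero: at most one parked, at most one moving
    push_neg at hO
    set P := S.filter (fun i => sfun n t i = 1) with hPdef
    have hPcard : P.card ≤ 1 := by
      apply Finset.card_le_one.2
      intro a ha b hb
      have haS := (Finset.mem_filter.1 ha).1
      have hbS := (Finset.mem_filter.1 hb).1
      exact parked_inj hd x t a b (Finset.mem_filter.1 ha).2 (Finset.mem_filter.1 hb).2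
        (hcon a haS b hbS)
    have hMcard : (S \ P).card ≤ 1 := by
      apply Finset.card_le_one.2
      intro a ha b hb
      have haS := (Finset.mem_sdiff.1 ha).1
      have ha1 : sfun n t a ≠ 1 := by
        have := (Finset.mem_sdiff.1 ha).2
        simpa [hPdef, haS] using this
      have hbS := (Finset.mem_sdiff.1 hb).1
      have hb1 : sfun n t b ≠ 1 := by
        have := (Finset.mem_sdiff.1 hb).2
        simpa [hPdef, hbS] using this
      exact moving_unique t a b (hO a haS) ha1 (hO b hbS) hb1
    have hPsub : P ⊆ S := Finset.filter_subset _ _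
    have : S.card ≤ 2 := by
      have := Finset.card_sdiff_of_subset hPsub
      omega
    omega

lemma pos_continuous {d n : ℕ} (hd : 1 ≤ d) :
    Continuous (fun p : ℝ × (Fin n → EuclideanSpace ℝ (Fin d)) =>
      fun i => pos hd p.2 p.1 i) := by
  apply continuous_pi
  intro i
  have ht : Continuous fun p : ℝ × (Fin n → EuclideanSpace ℝ (Fin d)) => p.1 :=
    continuous_fst
  have hxi : Continuous fun p : ℝ × (Fin n → EuclideanSpace ℝ (Fin d)) => p.2 i :=
    (continuous_apply i).comp continuous_snd
  have hR : Continuous fun p : ℝ × (Fin n → EuclideanSpace ℝ (Fin d)) => Rf p.2 := by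
    unfold Rf
    exact continuous_const.add (continuous_finset_sum _ fun j _ =>
      ((continuous_apply j).comp continuous_snd).norm)
  have hs : Continuous fun p : ℝ × (Fin n → EuclideanSpace ℝ (Fin d)) => sfun n p.1 i := by
    unfold sfun
    exact continuous_const.min
      (continuous_const.max ((continuous_const.mul ht).sub continuous_const))
  have hrho : Continuous fun p : ℝ × (Fin n → EuclideanSpace ℝ (Fin d)) => rho p.2 p.1 := by
    unfold rho
    exact continuous_const.add ((hR.sub continuous_const).mul
      (continuous_const.min (continuous_const.max
        (continuous_const.sub (continuous_const.mul ht)))))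
  unfold pos
  exact ((continuous_const.sub hs).smul hxi).add
    ((hs.mul (hrho.mul continuous_const)).smul continuous_const)

end Stmt4Aux

/-- for every `q > 0` the inclusion `M_d^{(k)}(n) ↪ M_d^{(k+1)}(n)` induces
the zero map on `q`-th homology.  Homology in positive degrees is modelled abstractly:
`H q` is any homotopy-invariant functor `TopCat ⥤ AddCommGrp` (for each degree `q > 0`)
sending constant maps to the zero morphism. -/
theorem stmt_4 (d k n : ℕ) (hd : 1 ≤ d) (hk : 2 ≤ k) (hn : 1 ≤ n)
    (H : ℕ → TopCat.{0} ⥤ AddCommGrpCat.{0}) (q : ℕ) (hq : 0 < q)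
    (hhtpy : ∀ (X Y : TopCat) (f g : X ⟶ Y),
      ContinuousMap.Homotopic f.hom g.hom → (H q).map f = (H q).map g)
    (hconst : ∀ (X Y : TopCat) (f : X ⟶ Y), (∃ y, ∀ x, f x = y) → (H q).map f = 0)
    (h : nonKEqual d k n ⊆ nonKEqual d (k + 1) n) :
    (H q).map (show TopCat.of (nonKEqual d k n) ⟶ TopCat.of (nonKEqual d (k + 1) n) from
        TopCat.ofHom ⟨Set.inclusion h, continuous_inclusion h⟩) = 0 := by
  -- the constant configuration
  have hcmem : (fun i : Fin n => ((((i:ℕ):ℝ))+1) • evec d hd) ∈ nonKEqual d (k+1) n := by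
    intro S hS
    have h2 : 1 < S.card := by omega
    obtain ⟨a, haS, b, hbS, hab⟩ := Finset.one_lt_card.1 h2
    refine ⟨a, haS, b, hbS, ?_⟩
    intro hcc
    apply hab
    have hcc' : ((((a:ℕ):ℝ))+1) • evec d hd = ((((b:ℕ):ℝ))+1) • evec d hd := hcc
    have h2' : ((((a:ℕ):ℝ)+1) - (((b:ℕ):ℝ)+1)) • evec d hd = 0 := by
      rw [sub_smul, hcc', sub_self]
    rcases smul_eq_zero.1 h2' with hs | he
    · have : ((a:ℕ):ℝ) = ((b:ℕ):ℝ) := by linarith [sub_eq_zero.1 hs]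
      exact Fin.ext (by exact_mod_cast this)
    · exact absurd he (evec_ne d hd)
  set cpt : ↥(nonKEqual d (k+1) n) := ⟨_, hcmem⟩ with hcpt
  set f : TopCat.of (nonKEqual d k n) ⟶ TopCat.of (nonKEqual d (k + 1) n) :=
    TopCat.ofHom ⟨Set.inclusion h, continuous_inclusion h⟩ with hf
  set g : TopCat.of (nonKEqual d k n) ⟶ TopCat.of (nonKEqual d (k + 1) n) :=
    TopCat.ofHom ⟨fun _ => cpt, continuous_const⟩ with hg
  have hhom : ContinuousMap.Homotopic f.hom g.hom := by
    constructor
    refine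
      { toFun := fun p => ⟨fun i => pos hd p.2.1 ((p.1 : ℝ)) i,
          pos_mem hd hk _ p.2.2 _⟩
        continuous_toFun := ?_
        map_zero_left := ?_
        map_one_left := ?_ }
    · apply Continuous.subtype_mk
      exact (pos_continuous hd).comp
        ((continuous_subtype_val.comp continuous_fst).prodMk
          (continuous_subtype_val.comp continuous_snd))
    · intro x
      apply Subtype.ext
      funext i
      show pos hd x.1 ((0 : unitInterval) : ℝ) i = _
      have hs : sfun n ((0 : unitInterval) : ℝ) i = 0 := by
        unfold sfun
        norm_num
      rw [pos_of_zero hd _ _ i hs]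
      rfl
    · intro x
      apply Subtype.ext
      funext i
      show pos hd x.1 ((1 : unitInterval) : ℝ) i = _
      have hin : ((i:ℕ):ℝ) ≤ (n:ℝ) - 1 := by
        have h' : (i:ℕ) + 1 ≤ n := i.2
        have := (Nat.cast_le (α := ℝ)).2 h'
        push_cast at this
        linarith
      have hs : sfun n ((1 : unitInterval) : ℝ) i = 1 := by
        unfold sfun
        rw [Set.Icc.coe_one, mul_one]
        rw [max_eq_right (by linarith), min_eq_left (by linarith)]
      have hρ : rho x.1 ((1 : unitInterval) : ℝ) = 1 := by
        unfold rho
        rw [Set.Icc.coe_one, mul_one]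
        norm_num
      rw [pos_of_one hd _ _ i hs, hρ, one_mul]
      rfl
  calc (H q).map f = (H q).map g := hhtpy _ _ f g hhom
    _ = 0 := hconst _ _ g ⟨cpt, fun _ => rfl⟩
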